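/- Let p, q be primes with q dividing (p^p-1)/(p-1), and let H be any group of order p^p q. Then H has a normal Sylow p-subgroup or a normal Sylow q-subgroup. -/

import Mathlib

theorem stmt_18 (p q : ℕ) (hp : p.Prime) (hq : q.Prime)
    (hdvd : q ∣ ∑ i ∈ Finset.range p, p ^ i)
    (H : Type*) [Group H] [Finite H] (hcard : Nat.card H = p ^ p * q) :
    (∃ P : Sylow p H, (P : Subgroup H).Normal) ∨
      (∃ Q : Sylow q H, (Q : Subgroup H).Normal) := by
  classical
  haveI : Fact p.Prime := ⟨hp⟩
  haveI : Fact q.Prime := ⟨hq⟩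
  haveI : Fintype H := Fintype.ofFinite H
  haveI : Fintype (Sylow q H) := Fintype.ofFinite _
  have hp1 := hp.one_lt
  have hq1 := hq.one_lt
  -- p ≠ q
  have hpq : p ≠ q := by
    rintro rfl
    have h0 : ((∑ i ∈ Finset.range p, p ^ i : ℕ) : ZMod p) = 0 :=
      (ZMod.natCast_eq_zero_iff _ _).mpr hdvd
    rw [Nat.cast_sum] at h0
    simp only [Nat.cast_pow, ZMod.natCast_self] at h0
    rw [Finset.sum_eq_single 0 (fun i _ hi => zero_pow hi)
      (fun h => absurd (Finset.mem_range.mpr (by omega)) h)] at h0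
    simp at h0
  -- the order of p modulo q is p
  have hsum0 : (∑ i ∈ Finset.range p, (p : ZMod q) ^ i) = 0 := by
    have h0 : ((∑ i ∈ Finset.range p, p ^ i : ℕ) : ZMod q) = 0 :=
      (ZMod.natCast_eq_zero_iff _ _).mpr hdvd
    rw [Nat.cast_sum] at h0
    simpa using h0
  have hpq0 : (p : ZMod q) ≠ 0 := by
    rw [Ne, ZMod.natCast_eq_zero_iff]
    intro h
    exact hpq ((Nat.prime_dvd_prime_iff_eq hq hp).mp h).symm
  have hppow : (p : ZMod q) ^ p = 1 := by
    have h := geom_sum_mul (p : ZMod q) p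
    rw [hsum0, zero_mul] at h
    exact (eq_of_sub_eq_zero h.symm).symm ▸ rfl
  have hord : orderOf (p : ZMod q) = p := by
    have hdvd' : orderOf (p : ZMod q) ∣ p := orderOf_dvd_of_pow_eq_one hppow
    rcases (Nat.dvd_prime hp).mp hdvd' with h1 | h1
    · exfalso
      have hp1' : (p : ZMod q) = 1 := orderOf_eq_one_iff.mp h1
      rw [hp1'] at hsum0
      apply hpq0
      simpa using hsum0
    · exact h1
  -- cardinalities of Sylow subgroups
  have hfactq : (Nat.card H).factorization q = 1 := by
    rw [hcard, Nat.factorization_mul (pow_ne_zero _ hp.pos.ne') hq.pos.ne',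
      Nat.factorization_pow, hq.factorization]
    simp [hp.factorization, Finsupp.single_apply, hpq]
  have hfactp : (Nat.card H).factorization p = p := by
    rw [hcard, Nat.factorization_mul (pow_ne_zero _ hp.pos.ne') hq.pos.ne',
      Nat.factorization_pow, hq.factorization]
    simp [hp.factorization, Finsupp.single_apply, (Ne.symm hpq : q ≠ p)]
  have hcardQ : ∀ Q : Sylow q H, Nat.card Q = q := fun Q => by
    rw [Q.card_eq_multiplicity, hfactq, pow_one]
  have hcardP : ∀ P : Sylow p H, Nat.card P = p ^ p := fun P => by
    rw [P.card_eq_multiplicity, hfactp]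
  have hindexQ : ∀ Q : Sylow q H, (Q : Subgroup H).index = p ^ p := fun Q => by
    have h := Subgroup.card_mul_index (Q : Subgroup H)
    rw [hcardQ Q, hcard] at h
    have : q * (Q : Subgroup H).index = q * p ^ p := by rw [h]; ring
    exact Nat.eq_of_mul_eq_mul_left hq.pos this
  -- the number of Sylow q subgroups is a power of p
  obtain ⟨k, hkp, hk⟩ : ∃ k ≤ p, Nat.card (Sylow q H) = p ^ k := by
    have hd : Nat.card (Sylow q H) ∣ p ^ p := by
      obtain ⟨Q⟩ := (Sylow.nonempty : Nonempty (Sylow q H))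
      exact (hindexQ Q) ▸ Q.card_dvd_index
    obtain ⟨k, hk, hk2⟩ := (Nat.dvd_prime_pow hp).mp hd
    exact ⟨k, hk, hk2⟩
  -- k = 0 or k = p
  have hk0p : k = 0 ∨ k = p := by
    have hmod : Nat.card (Sylow q H) ≡ 1 [MOD q] := card_sylow_modEq_one q H
    rw [hk] at hmod
    have hzm : (p : ZMod q) ^ k = 1 := by
      have := (ZMod.natCast_eq_natCast_iff _ _ _).mpr hmod
      push_cast at this
      exact this
    have hdk : p ∣ k := hord ▸ orderOf_dvd_of_pow_eq_one hzm
    rcases Nat.eq_zero_or_pos k with h0 | h0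
    · exact Or.inl h0
    · exact Or.inr (Nat.le_antisymm hkp (Nat.le_of_dvd h0 hdk))
  rcases hk0p with h0 | h0
  · -- unique Sylow q subgroup: it is normal
    right
    rw [h0, pow_zero] at hk
    have hss : ∀ Q₁ Q₂ : Sylow q H, Q₁ = Q₂ := fun Q₁ Q₂ =>
      (Nat.card_eq_one_iff_unique.mp hk).1.elim Q₁ Q₂
    obtain ⟨Q⟩ := (Sylow.nonempty : Nonempty (Sylow q H))
    refine ⟨Q, ?_⟩
    rw [← Subgroup.normalizer_eq_top_iff, eq_top_iff]
    intro g _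
    refine Sylow.smul_eq_iff_mem_normalizer.mp ?_
    exact hss _ _
  · -- counting argument: the Sylow p subgroup is normal
    left
    rw [h0] at hk
    have hnq : Nat.card (Sylow q H) = p ^ p := hk
    have hzpow : ∀ (x : H), orderOf x = q → ∀ Q : Sylow q H, x ∈ (Q : Subgroup H) →
        Subgroup.zpowers x = (Q : Subgroup H) := by
      intro x hx Q hxQ
      refine Subgroup.eq_of_le_of_card_ge ((Subgroup.zpowers_le).mpr hxQ) ?_
      rw [hcardQ Q, Nat.card_zpowers, hx]
    set S : Finset H := Finset.univ.filter (fun x => orderOf x = q) with hS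
    set f : Sylow q H → Finset H :=
      fun Q => (Finset.univ.filter (fun x => x ∈ (Q : Subgroup H))).erase 1 with hf
    have hfcard : ∀ Q : Sylow q H, (f Q).card = q - 1 := by
      intro Q
      have h1 : (Finset.univ.filter (fun x => x ∈ (Q : Subgroup H))).card = q := by
        rw [← Fintype.card_subtype, ← Nat.card_eq_fintype_card]
        exact hcardQ Q
      rw [hf, Finset.card_erase_of_mem
        (Finset.mem_filter.mpr ⟨Finset.mem_univ 1, (Q : Subgroup H).one_mem⟩), h1]
    have hmemf : ∀ (Q : Sylow q H) (x : H), x ∈ f Q ↔ x ∈ (Q : Subgroup H) ∧ x ≠ 1 := by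
      intro Q x
      simp only [hf, Finset.mem_erase, Finset.mem_filter, Finset.mem_univ, true_and]
      tauto
    have hordf : ∀ (Q : Sylow q H) (x : H), x ∈ f Q → orderOf x = q := by
      intro Q x hx
      rw [hmemf] at hx
      have hdvd2 : orderOf x ∣ q := by
        have := Subgroup.orderOf_dvd_natCard (Q : Subgroup H) hx.1
        rwa [hcardQ Q] at this
      rcases (Nat.dvd_prime hq).mp hdvd2 with h | h
      · exact absurd (orderOf_eq_one_iff.mp h) hx.2
      · exact h
    have hSeq : S = Finset.univ.biUnion f := by
      ext x
      simp only [hS, Finset.mem_filter, Finset.mem_univ, true_and, Finset.mem_biUnion]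
      constructor
      · intro hx
        have hpg : IsPGroup q (Subgroup.zpowers x) := by
          apply IsPGroup.of_card
          rw [Nat.card_zpowers, hx, pow_one]
        obtain ⟨Q, hQ⟩ := hpg.exists_le_sylow
        refine ⟨Q, (hmemf Q x).mpr ⟨hQ (Subgroup.mem_zpowers x), ?_⟩⟩
        intro h
        rw [h, orderOf_one] at hx
        omega
      · rintro ⟨Q, hQ⟩
        exact hordf Q x hQ
    have hdisj : ∀ Q₁ ∈ (Finset.univ : Finset (Sylow q H)), ∀ Q₂ ∈ Finset.univ,
        Q₁ ≠ Q₂ → Disjoint (f Q₁) (f Q₂) := by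
      intro Q₁ _ Q₂ _ hne
      rw [Finset.disjoint_left]
      intro x hx1 hx2
      apply hne
      have ho := hordf Q₁ x hx1
      apply Sylow.ext
      rw [← hzpow x ho Q₁ ((hmemf Q₁ x).mp hx1).1, ← hzpow x ho Q₂ ((hmemf Q₂ x).mp hx2).1]
    have hScard : S.card = p ^ p * (q - 1) := by
      rw [hSeq, Finset.card_biUnion hdisj]
      simp only [hfcard, Finset.sum_const, Finset.card_univ, smul_eq_mul]
      rw [← Nat.card_eq_fintype_card, hnq]
    have hcompl : Sᶜ.card = p ^ p := by
      rw [Finset.card_compl, ← Nat.card_eq_fintype_card, hcard, hScard]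
      have h1 : p ^ p * (q - 1) + p ^ p = p ^ p * q := by
        rw [← Nat.mul_succ]
        congr 1
        omega
      omega
    have hPeq : ∀ P : Sylow p H, Finset.univ.filter (fun x => x ∈ (P : Subgroup H)) = Sᶜ := by
      intro P
      apply Finset.eq_of_subset_of_card_le
      · intro x hx
        rw [Finset.mem_filter] at hx
        rw [Finset.mem_compl, hS, Finset.mem_filter]
        push_neg
        intro _
        obtain ⟨n, hn⟩ := P.isPGroup' ⟨x, hx.2⟩
        have hdn : orderOf x ∣ p ^ n := by
          apply orderOf_dvd_of_pow_eq_one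
          have := congrArg (Subgroup.subtype (P : Subgroup H)) hn
          simpa using this
        intro hxq
        rw [hxq] at hdn
        rcases (Nat.dvd_prime_pow hp).mp hdn with ⟨m, _, hm⟩
        rcases Nat.eq_zero_or_pos m with hm0 | hm0
        · rw [hm0, pow_zero] at hm; omega
        · exact hpq ((Nat.prime_dvd_prime_iff_eq hp hq).mp (hm ▸ dvd_pow_self p hm0.ne'))
      · rw [hcompl]
        have h1 : (Finset.univ.filter (fun x => x ∈ (P : Subgroup H))).card = p ^ p := by
          rw [← Fintype.card_subtype, ← Nat.card_eq_fintype_card]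
          exact hcardP P
        omega
    have hss : ∀ P₁ P₂ : Sylow p H, P₁ = P₂ := by
      intro P₁ P₂
      apply Sylow.ext
      ext x
      have h1 := hPeq P₁
      have h2 := hPeq P₂
      rw [← h2] at h1
      constructor <;> intro hx
      · have hx' : x ∈ Finset.univ.filter (fun y => y ∈ (P₁ : Subgroup H)) :=
          Finset.mem_filter.mpr ⟨Finset.mem_univ x, hx⟩
        rw [h1, Finset.mem_filter] at hx'
        exact hx'.2
      · have hx' : x ∈ Finset.univ.filter (fun y => y ∈ (P₂ : Subgroup H)) :=
          Finset.mem_filter.mpr ⟨Finset.mem_univ x, hx⟩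
        rw [← h1, Finset.mem_filter] at hx'
        exact hx'.2
    obtain ⟨P⟩ := (Sylow.nonempty : Nonempty (Sylow p H))
    refine ⟨P, ?_⟩
    rw [← Subgroup.normalizer_eq_top_iff, eq_top_iff]
    intro g _
    refine Sylow.smul_eq_iff_mem_normalizer.mp ?_
    exact hss _ _
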